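/- arXiv:1708.03890 — 2 statements merged into one kernel-verified Lean document; each statement's English description precedes it below -/
import Mathlib

section
/- Let G be a graph with a pendant vertex v whose unique neighbour is u. Then Σ_{W ⊆ V(G), v∈W} x^{|W|} y^{|N_G(W)|} = x · Σ_{W ⊆ V(G−v), u∈W} x^{|W|} y^{|N_{G−v}(W)|} + x y · J(G − v − u), and Σ_{W ⊆ V(G), v∉W} x^{|W|} y^{|N_G(W)|} = (y−1) · Σ_{W ⊆ V(G−v), u∈W} x^{|W|} y^{|N_{G−v}(W)|} + J(G − v). -/
open Finset
open scoped Classical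

/-- External neighbourhood N(W) = N[W] \ W of a vertex subset. -/
noncomputable def extN {V : Type} [Fintype V] (G : SimpleGraph V) (W : Finset V) : Finset V :=
  Finset.univ.filter (fun v => v ∉ W ∧ ∃ w ∈ W, G.Adj v w)

/-- The bivariate domination polynomial J(G;x,y) = ∑_{W ⊆ V} x^|W| y^|N(W)|. -/
noncomputable def JP {V : Type} [Fintype V] (G : SimpleGraph V) (x y : ℝ) : ℝ :=
  ∑ W : Finset V, x ^ W.card * y ^ (extN G W).card

/-- Vertex deletion G − a. -/
noncomputable def Gdel {V : Type} (G : SimpleGraph V) (a : V) : SimpleGraph {v : V // v ≠ a} :=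
  G.induce {v : V | v ≠ a}

/-- Deletion of a set of vertices. -/
noncomputable def GdelSet {V : Type} (G : SimpleGraph V) (S : Set V) : SimpleGraph {v : V // v ∉ S} :=
  G.induce {v : V | v ∉ S}

/-- Vertex contraction G∖a: join all neighbours of a, then delete a. -/
noncomputable def Gcon {V : Type} (G : SimpleGraph V) (a : V) : SimpleGraph {v : V // v ≠ a} where
  Adj u v := u ≠ v ∧ (G.Adj u.val v.val ∨ (G.Adj u.val a ∧ G.Adj a v.val))
  symm := ⟨fun _ _ ⟨h1, h2⟩ =>
    ⟨fun e => h1 e.symm, h2.imp G.adj_symm (fun ⟨p, q⟩ => ⟨G.adj_symm q, G.adj_symm p⟩)⟩⟩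
  loopless := ⟨fun _ h => h.1 rfl⟩

section PendantHelpers

variable {V : Type} [Fintype V]

lemma mem_extN {G : SimpleGraph V} {W : Finset V} {a : V} :
    a ∈ extN G W ↔ a ∉ W ∧ ∃ w ∈ W, G.Adj a w := by
  simp [extN]

lemma gdel_adj {G : SimpleGraph V} {v : V} {a b : {w : V // w ≠ v}} :
    (Gdel G v).Adj a b ↔ G.Adj a.1 b.1 := by
  simp [Gdel]

lemma gdelSet_adj {G : SimpleGraph V} {S : Set V} {a b : {w : V // w ∉ S}} :
    (GdelSet G S).Adj a b ↔ G.Adj a.1 b.1 := by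
  simp [GdelSet]

lemma mem_map_subtype {p : V → Prop} (s : Finset {w : V // p w}) (a : V) :
    a ∈ s.map (Function.Embedding.subtype p) ↔ ∃ b ∈ s, (b : V) = a := by
  simp

lemma key_del {G : SimpleGraph V} {u v : V} (hune : u ≠ v)
    (hvadj : ∀ w, G.Adj v w ↔ w = u) (W : Finset {w : V // w ≠ v}) :
    extN G (W.map (Function.Embedding.subtype _)) =
      if (⟨u, hune⟩ : {w : V // w ≠ v}) ∈ W then
        insert v ((extN (Gdel G v) W).map (Function.Embedding.subtype _))
      else (extN (Gdel G v) W).map (Function.Embedding.subtype _) := by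
  ext a
  by_cases hav : a = v
  · subst a
    have hvm : ∀ s : Finset {w : V // w ≠ v},
        v ∉ s.map (Function.Embedding.subtype _) := by
      intro s h
      rcases (mem_map_subtype s v).mp h with ⟨b, _, hb⟩
      exact b.2 hb
    by_cases huW : (⟨u, hune⟩ : {w : V // w ≠ v}) ∈ W
    · rw [if_pos huW, Finset.mem_insert]
      refine iff_of_true ?_ (Or.inl rfl)
      rw [mem_extN]
      exact ⟨hvm W, u, Finset.mem_map_of_mem _ huW, (hvadj u).mpr rfl⟩
    · rw [if_neg huW]
      refine iff_of_false ?_ (hvm _)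
      rw [mem_extN]
      rintro ⟨-, w, hw, haw⟩
      have hwu : w = u := (hvadj w).mp haw
      rcases (mem_map_subtype W w).mp hw with ⟨b, hb, hbw⟩
      exact huW ((Subtype.ext (hbw.trans hwu) : b = ⟨u, hune⟩) ▸ hb)
  · have hiff : a ∈ extN G (W.map (Function.Embedding.subtype _)) ↔
        a ∈ (extN (Gdel G v) W).map (Function.Embedding.subtype _) := by
      rw [mem_extN]
      constructor
      · rintro ⟨hnW, w, hw, haw⟩
        rcases (mem_map_subtype W w).mp hw with ⟨b, hb, hbw⟩
        refine (mem_map_subtype _ a).mpr ⟨⟨a, hav⟩, ?_, rfl⟩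
        rw [mem_extN]
        refine ⟨fun h => hnW ((mem_map_subtype W a).mpr ⟨_, h, rfl⟩), b, hb, ?_⟩
        rw [gdel_adj]
        exact hbw ▸ haw
      · intro hmem
        rcases (mem_map_subtype _ a).mp hmem with ⟨b, hb, hba⟩
        rw [mem_extN] at hb
        obtain ⟨hbnW, c, hc, hbc⟩ := hb
        rw [gdel_adj] at hbc
        subst hba
        refine ⟨?_, c.1, (mem_map_subtype W c.1).mpr ⟨c, hc, rfl⟩, hbc⟩
        intro h
        rcases (mem_map_subtype W b.1).mp h with ⟨d, hd, hdb⟩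
        exact hbnW (Subtype.ext hdb ▸ hd)
    split_ifs with huW
    · rw [Finset.mem_insert]
      simp [hav, hiff]
    · exact hiff

lemma key_ins_mem {G : SimpleGraph V} {u v : V} (hune : u ≠ v)
    (hvadj : ∀ w, G.Adj v w ↔ w = u) (W : Finset {w : V // w ≠ v})
    (huW : (⟨u, hune⟩ : {w : V // w ≠ v}) ∈ W) :
    extN G (insert v (W.map (Function.Embedding.subtype _))) =
      (extN (Gdel G v) W).map (Function.Embedding.subtype _) := by
  have havv : ∀ a, G.Adj a v ↔ a = u := fun a => by rw [G.adj_comm]; exact hvadj a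
  ext a
  rw [mem_extN, mem_map_subtype]
  constructor
  · rintro ⟨hn, w, hw, haw⟩
    rw [Finset.mem_insert] at hn hw
    push_neg at hn
    obtain ⟨hav, hnm⟩ := hn
    rcases hw with rfl | hw
    · exfalso
      have : a = u := (havv a).mp haw
      subst this
      exact hnm (Finset.mem_map_of_mem _ huW)
    · rcases (mem_map_subtype W w).mp hw with ⟨b, hb, hbw⟩
      refine ⟨⟨a, hav⟩, ?_, rfl⟩
      rw [mem_extN]
      refine ⟨fun h => hnm ((mem_map_subtype W a).mpr ⟨_, h, rfl⟩), b, hb, ?_⟩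
      rw [gdel_adj]
      exact hbw ▸ haw
  · rintro ⟨b, hb, hba⟩
    rw [mem_extN] at hb
    obtain ⟨hbnW, c, hc, hbc⟩ := hb
    rw [gdel_adj] at hbc
    subst hba
    have hbm : b.1 ∉ W.map (Function.Embedding.subtype _) := by
      intro h
      rcases (mem_map_subtype W b.1).mp h with ⟨d, hd, hdb⟩
      exact hbnW (Subtype.ext hdb ▸ hd)
    refine ⟨?_, c.1, Finset.mem_insert_of_mem ((mem_map_subtype W c.1).mpr ⟨c, hc, rfl⟩), hbc⟩
    rw [Finset.mem_insert]
    push_neg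
    exact ⟨b.2, hbm⟩

lemma key_ins_notmem {G : SimpleGraph V} {u v : V} (hadj : G.Adj v u)
    (hvadj : ∀ w, G.Adj v w ↔ w = u)
    (W : Finset {w : V // w ∉ ({w : V | w = v ∨ w = u} : Set V)}) :
    extN G (insert v (W.map (Function.Embedding.subtype _))) =
      insert u ((extN (GdelSet G {w : V | w = v ∨ w = u}) W).map
        (Function.Embedding.subtype _)) := by
  have havv : ∀ a, G.Adj a v ↔ a = u := fun a => by rw [G.adj_comm]; exact hvadj a
  have hnm : ∀ (s : Finset {w : V // w ∉ ({w : V | w = v ∨ w = u} : Set V)}) (a : V),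
      (a = v ∨ a = u) → a ∉ s.map (Function.Embedding.subtype _) := by
    intro s a ha h
    rcases (mem_map_subtype s a).mp h with ⟨b, _, hb⟩
    exact b.2 (hb ▸ ha)
  ext a
  rw [mem_extN]
  by_cases hav : a = v
  · subst a
    refine iff_of_false (fun h => h.1 (Finset.mem_insert_self _ _)) ?_
    intro h
    rcases Finset.mem_insert.mp h with h | h
    · exact hadj.ne h
    · exact hnm _ _ (Or.inl rfl) h
  · by_cases hau : a = u
    · subst a
      refine iff_of_true ?_ (Finset.mem_insert_self _ _)
      refine ⟨?_, v, Finset.mem_insert_self _ _, hadj.symm⟩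
      rw [Finset.mem_insert]
      push_neg
      exact ⟨hav, hnm _ _ (Or.inr rfl)⟩
    · have hp : a ∉ ({w : V | w = v ∨ w = u} : Set V) := by
        rintro (h | h)
        exacts [hav h, hau h]
      constructor
      · rintro ⟨hn, w, hw, haw⟩
        rw [Finset.mem_insert] at hn hw
        push_neg at hn
        rcases hw with rfl | hw
        · exact absurd ((havv a).mp haw) hau
        · rcases (mem_map_subtype W w).mp hw with ⟨b, hb, hbw⟩
          refine Finset.mem_insert_of_mem ((mem_map_subtype _ a).mpr ⟨⟨a, hp⟩, ?_, rfl⟩)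
          rw [mem_extN]
          refine ⟨fun h => hn.2 ((mem_map_subtype W a).mpr ⟨_, h, rfl⟩), b, hb, ?_⟩
          rw [gdelSet_adj]
          exact hbw ▸ haw
      · intro h
        rcases Finset.mem_insert.mp h with h | h
        · exact absurd h hau
        rcases (mem_map_subtype _ a).mp h with ⟨b, hb, hba⟩
        rw [mem_extN] at hb
        obtain ⟨hbnW, c, hc, hbc⟩ := hb
        rw [gdelSet_adj] at hbc
        subst hba
        refine ⟨?_, c.1, Finset.mem_insert_of_mem ((mem_map_subtype W c.1).mpr ⟨c, hc, rfl⟩), hbc⟩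
        rw [Finset.mem_insert]
        push_neg
        refine ⟨fun h => b.2 (Or.inl h), ?_⟩
        intro h
        rcases (mem_map_subtype W b.1).mp h with ⟨d, hd, hdb⟩
        exact hbnW (Subtype.ext hdb ▸ hd)

lemma not_mem_map_ne {v : V} (s : Finset {w : V // w ≠ v}) :
    v ∉ s.map (Function.Embedding.subtype _) := by
  intro h
  rcases (mem_map_subtype s v).mp h with ⟨b, _, hb⟩
  exact b.2 hb

def embT2 {V : Type} (v u : V) :
    {w : V // w ∉ ({w : V | w = v ∨ w = u} : Set V)} ↪ {w : V // w ≠ v} where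
  toFun a := ⟨a.1, fun h => a.2 (Or.inl h)⟩
  inj' := by
    intro a b h
    have h2 := congrArg Subtype.val h
    exact Subtype.ext h2

end PendantHelpers

theorem J_pendant_conditional {V : Type} [Fintype V] (G : SimpleGraph V) (u v : V)
    (hadj : G.Adj v u) (hdeg : Finset.univ.filter (fun w => G.Adj v w) = {u}) (x y : ℝ) :
    (∑ W ∈ Finset.univ.filter (fun W : Finset V => v ∈ W),
        x ^ W.card * y ^ (extN G W).card
      = x * (∑ W ∈ Finset.univ.filter
            (fun W : Finset {w : V // w ≠ v} => (⟨u, hadj.ne'⟩ : {w : V // w ≠ v}) ∈ W),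
          x ^ W.card * y ^ (extN (Gdel G v) W).card)
        + x * y * JP (GdelSet G {w : V | w = v ∨ w = u}) x y)
    ∧ (∑ W ∈ Finset.univ.filter (fun W : Finset V => v ∉ W),
        x ^ W.card * y ^ (extN G W).card
      = (y - 1) * (∑ W ∈ Finset.univ.filter
            (fun W : Finset {w : V // w ≠ v} => (⟨u, hadj.ne'⟩ : {w : V // w ≠ v}) ∈ W),
          x ^ W.card * y ^ (extN (Gdel G v) W).card)
        + JP (Gdel G v) x y) := by
  classical
  have hune : u ≠ v := hadj.ne'
  have hvadj : ∀ w, G.Adj v w ↔ w = u := by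
    intro w
    have := Finset.ext_iff.mp hdeg w
    simpa using this
  have hfe : (embT2 v u).trans (Function.Embedding.subtype (fun w => w ≠ v))
      = Function.Embedding.subtype (fun w => w ∉ ({w : V | w = v ∨ w = u} : Set V)) := by
    ext a
    rfl
  have hu_not_mem2 : ∀ s : Finset {w : V // w ∉ ({w : V | w = v ∨ w = u} : Set V)},
      u ∉ s.map (Function.Embedding.subtype _) := by
    intro s h
    rcases (mem_map_subtype s u).mp h with ⟨b, _, hb⟩
    exact b.2 (Or.inr hb)
  -- card identities
  have card_del : ∀ W : Finset {w : V // w ≠ v},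
      (extN G (W.map (Function.Embedding.subtype _))).card
        = (extN (Gdel G v) W).card
          + (if (⟨u, hadj.ne'⟩ : {w : V // w ≠ v}) ∈ W then 1 else 0) := by
    intro W
    rw [key_del hune hvadj W]
    split_ifs
    · rw [Finset.card_insert_of_notMem (not_mem_map_ne _), Finset.card_map]
    · rw [Finset.card_map, add_zero]
  have card_ins_mem : ∀ W : Finset {w : V // w ≠ v},
      (⟨u, hadj.ne'⟩ : {w : V // w ≠ v}) ∈ W →
      (extN G (insert v (W.map (Function.Embedding.subtype _)))).card
        = (extN (Gdel G v) W).card := by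
    intro W hW
    rw [key_ins_mem hune hvadj W hW, Finset.card_map]
  have card_ins_notmem : ∀ W : Finset {w : V // w ∉ ({w : V | w = v ∨ w = u} : Set V)},
      (extN G (insert v (W.map (Function.Embedding.subtype _)))).card
        = (extN (GdelSet G {w : V | w = v ∨ w = u}) W).card + 1 := by
    intro W
    rw [key_ins_notmem hadj hvadj W,
      Finset.card_insert_of_notMem (hu_not_mem2 _), Finset.card_map]
  -- reindexing lemmas
  have hinjmap : ∀ A ∈ (Finset.univ : Finset (Finset {w : V // w ≠ v})), ∀ B ∈ Finset.univ,
      A.map (Function.Embedding.subtype (fun w => w ≠ v))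
        = B.map (Function.Embedding.subtype (fun w => w ≠ v)) → A = B :=
    fun A _ B _ h => Finset.map_injective _ h
  have himg2 : (Finset.univ.filter (fun W : Finset V => v ∉ W))
      = Finset.univ.image (fun W : Finset {w : V // w ≠ v} =>
          W.map (Function.Embedding.subtype (fun w => w ≠ v))) := by
    ext W
    simp only [Finset.mem_filter, Finset.mem_univ, true_and, Finset.mem_image]
    constructor
    · intro hvW
      exact ⟨W.subtype _,
        Finset.subtype_map_of_mem (fun x hx hxv => hvW (hxv ▸ hx))⟩
    · rintro ⟨W', rfl⟩
      exact not_mem_map_ne W'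
  have hsum2 : (∑ W ∈ Finset.univ.filter (fun W : Finset V => v ∉ W),
        x ^ W.card * y ^ (extN G W).card)
      = ∑ W' : Finset {w : V // w ≠ v},
          x ^ W'.card * y ^ ((extN (Gdel G v) W').card
            + (if (⟨u, hadj.ne'⟩ : {w : V // w ≠ v}) ∈ W' then 1 else 0)) := by
    rw [himg2, Finset.sum_image hinjmap]
    refine Finset.sum_congr rfl fun W' _ => ?_
    rw [Finset.card_map, card_del W']
  have part2 : (∑ W ∈ Finset.univ.filter (fun W : Finset V => v ∉ W),
        x ^ W.card * y ^ (extN G W).card)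
      = (y - 1) * (∑ W ∈ Finset.univ.filter
            (fun W : Finset {w : V // w ≠ v} => (⟨u, hadj.ne'⟩ : {w : V // w ≠ v}) ∈ W),
          x ^ W.card * y ^ (extN (Gdel G v) W).card)
        + JP (Gdel G v) x y := by
    rw [hsum2,
      ← Finset.sum_filter_add_sum_filter_not Finset.univ
        (fun W : Finset {w : V // w ≠ v} => (⟨u, hadj.ne'⟩ : {w : V // w ≠ v}) ∈ W)]
    have hJP : JP (Gdel G v) x y
        = (∑ W ∈ Finset.univ.filter
              (fun W : Finset {w : V // w ≠ v} => (⟨u, hadj.ne'⟩ : {w : V // w ≠ v}) ∈ W),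
            x ^ W.card * y ^ (extN (Gdel G v) W).card)
          + ∑ W ∈ Finset.univ.filter
              (fun W : Finset {w : V // w ≠ v} => ¬ (⟨u, hadj.ne'⟩ : {w : V // w ≠ v}) ∈ W),
            x ^ W.card * y ^ (extN (Gdel G v) W).card := by
      rw [JP, Finset.sum_filter_add_sum_filter_not]
    rw [hJP]
    have h1 : (∑ W ∈ Finset.univ.filter
          (fun W : Finset {w : V // w ≠ v} => (⟨u, hadj.ne'⟩ : {w : V // w ≠ v}) ∈ W),
        x ^ W.card * y ^ ((extN (Gdel G v) W).card
          + (if (⟨u, hadj.ne'⟩ : {w : V // w ≠ v}) ∈ W then 1 else 0)))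
        = (∑ W ∈ Finset.univ.filter
            (fun W : Finset {w : V // w ≠ v} => (⟨u, hadj.ne'⟩ : {w : V // w ≠ v}) ∈ W),
          x ^ W.card * y ^ (extN (Gdel G v) W).card) * y := by
      rw [Finset.sum_mul]
      refine Finset.sum_congr rfl fun W hW => ?_
      rw [if_pos (Finset.mem_filter.mp hW).2, pow_succ]
      ring
    have h2 : (∑ W ∈ Finset.univ.filter
          (fun W : Finset {w : V // w ≠ v} => ¬ (⟨u, hadj.ne'⟩ : {w : V // w ≠ v}) ∈ W),
        x ^ W.card * y ^ ((extN (Gdel G v) W).card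
          + (if (⟨u, hadj.ne'⟩ : {w : V // w ≠ v}) ∈ W then 1 else 0)))
        = ∑ W ∈ Finset.univ.filter
            (fun W : Finset {w : V // w ≠ v} => ¬ (⟨u, hadj.ne'⟩ : {w : V // w ≠ v}) ∈ W),
          x ^ W.card * y ^ (extN (Gdel G v) W).card := by
      refine Finset.sum_congr rfl fun W hW => ?_
      rw [if_neg (Finset.mem_filter.mp hW).2, add_zero]
    rw [h1, h2]
    ring
  -- part 1
  have himg1 : (Finset.univ.filter (fun W : Finset V => v ∈ W))
      = Finset.univ.image (fun W' : Finset {w : V // w ≠ v} =>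
          insert v (W'.map (Function.Embedding.subtype (fun w => w ≠ v)))) := by
    ext W
    simp only [Finset.mem_filter, Finset.mem_univ, true_and, Finset.mem_image]
    constructor
    · intro hvW
      refine ⟨(W.erase v).subtype _, ?_⟩
      rw [Finset.subtype_map_of_mem (fun x hx => Finset.ne_of_mem_erase hx)]
      exact Finset.insert_erase hvW
    · rintro ⟨W', rfl⟩
      exact Finset.mem_insert_self _ _
  have hinj1 : ∀ A ∈ (Finset.univ : Finset (Finset {w : V // w ≠ v})), ∀ B ∈ Finset.univ,
      insert v (A.map (Function.Embedding.subtype (fun w => w ≠ v)))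
        = insert v (B.map (Function.Embedding.subtype (fun w => w ≠ v))) → A = B := by
    intro A _ B _ h
    apply Finset.map_injective (Function.Embedding.subtype (fun w => w ≠ v))
    rw [← Finset.erase_insert (not_mem_map_ne A), ← Finset.erase_insert (not_mem_map_ne B), h]
  have hsum1 : (∑ W ∈ Finset.univ.filter (fun W : Finset V => v ∈ W),
        x ^ W.card * y ^ (extN G W).card)
      = ∑ W' : Finset {w : V // w ≠ v},
          x ^ (W'.card + 1)
            * y ^ (extN G (insert v
                (W'.map (Function.Embedding.subtype (fun w => w ≠ v))))).card := by
    rw [himg1, Finset.sum_image hinj1]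
    refine Finset.sum_congr rfl fun W' _ => ?_
    rw [Finset.card_insert_of_notMem (not_mem_map_ne _), Finset.card_map]
  have himg3 : (Finset.univ.filter
        (fun W : Finset {w : V // w ≠ v} => ¬ (⟨u, hadj.ne'⟩ : {w : V // w ≠ v}) ∈ W))
      = Finset.univ.image
          (fun W2 : Finset {w : V // w ∉ ({w : V | w = v ∨ w = u} : Set V)} =>
            W2.map (embT2 v u)) := by
    ext W
    simp only [Finset.mem_filter, Finset.mem_univ, true_and, Finset.mem_image]
    constructor
    · intro hW
      refine ⟨(W.map (Function.Embedding.subtype (fun w => w ≠ v))).subtype _, ?_⟩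
      apply Finset.map_injective (Function.Embedding.subtype (fun w => w ≠ v))
      rw [Finset.map_map, hfe]
      refine Finset.subtype_map_of_mem ?_
      intro z hz
      rcases (mem_map_subtype _ z).mp hz with ⟨b, hb, hbz⟩
      rintro (h | h)
      · exact b.2 (hbz.trans h)
      · exact hW (((Subtype.ext (hbz.trans h)) : b = ⟨u, hadj.ne'⟩) ▸ hb)
    · rintro ⟨W2, rfl⟩
      intro h
      rcases Finset.mem_map.mp h with ⟨b, _, hb⟩
      exact b.2 (Or.inr (congrArg Subtype.val hb))
  have hinj3 : ∀ A ∈ (Finset.univ :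
        Finset (Finset {w : V // w ∉ ({w : V | w = v ∨ w = u} : Set V)})), ∀ B ∈ Finset.univ,
      A.map (embT2 v u) = B.map (embT2 v u) → A = B :=
    fun A _ B _ h => Finset.map_injective _ h
  have part1 : (∑ W ∈ Finset.univ.filter (fun W : Finset V => v ∈ W),
        x ^ W.card * y ^ (extN G W).card)
      = x * (∑ W ∈ Finset.univ.filter
            (fun W : Finset {w : V // w ≠ v} => (⟨u, hadj.ne'⟩ : {w : V // w ≠ v}) ∈ W),
          x ^ W.card * y ^ (extN (Gdel G v) W).card)
        + x * y * JP (GdelSet G {w : V | w = v ∨ w = u}) x y := by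
    rw [hsum1,
      ← Finset.sum_filter_add_sum_filter_not Finset.univ
        (fun W : Finset {w : V // w ≠ v} => (⟨u, hadj.ne'⟩ : {w : V // w ≠ v}) ∈ W)]
    have hp1 : (∑ W ∈ Finset.univ.filter
          (fun W : Finset {w : V // w ≠ v} => (⟨u, hadj.ne'⟩ : {w : V // w ≠ v}) ∈ W),
        x ^ (W.card + 1)
          * y ^ (extN G (insert v
              (W.map (Function.Embedding.subtype (fun w => w ≠ v))))).card)
        = x * ∑ W ∈ Finset.univ.filter
            (fun W : Finset {w : V // w ≠ v} => (⟨u, hadj.ne'⟩ : {w : V // w ≠ v}) ∈ W),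
          x ^ W.card * y ^ (extN (Gdel G v) W).card := by
      rw [Finset.mul_sum]
      refine Finset.sum_congr rfl fun W hW => ?_
      rw [card_ins_mem W (Finset.mem_filter.mp hW).2, pow_succ]
      ring
    have hp2 : (∑ W ∈ Finset.univ.filter
          (fun W : Finset {w : V // w ≠ v} => ¬ (⟨u, hadj.ne'⟩ : {w : V // w ≠ v}) ∈ W),
        x ^ (W.card + 1)
          * y ^ (extN G (insert v
              (W.map (Function.Embedding.subtype (fun w => w ≠ v))))).card)
        = x * y * JP (GdelSet G {w : V | w = v ∨ w = u}) x y := by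
      rw [himg3, Finset.sum_image hinj3, JP, Finset.mul_sum]
      refine Finset.sum_congr rfl fun W2 _ => ?_
      rw [Finset.card_map, Finset.map_map, hfe, card_ins_notmem W2, pow_succ, pow_succ]
      ring
    rw [hp1, hp2]
  exact ⟨part1, part2⟩
end

section
/- Let M be a finite simple graph with non-adjacent vertices a, b such that every vertex of N(a) ∩ N(b) is adjacent to every other vertex of M, and every vertex of N(a) \ N(b) is adjacent to every vertex of N(b). Form M₁ from M by adding new vertices c, d and edges ab, bc, cd, ad; form M₂ from M by adding new vertices c, d and edges ac, bc, ad, bd. Then J(M₁;x,y) = J(M₂;x,y). -/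
open Finset
open scoped Classical

/-- M₁: add new vertices c = inr false and d = inr true to M together with
the edges ab, bc, cd, ad. -/
noncomputable def addSquare₁ {V : Type} (M : SimpleGraph V) (a b : V) :
    SimpleGraph (V ⊕ Bool) :=
  SimpleGraph.fromRel (fun p q => match p, q with
    | Sum.inl p, Sum.inl q => M.Adj p q ∨ (p = a ∧ q = b)
    | Sum.inl p, Sum.inr c => (p = b ∧ c = false) ∨ (p = a ∧ c = true)
    | Sum.inr c, Sum.inr c' => c ≠ c'
    | _, _ => False)

/-- M₂: add new vertices c = inr false and d = inr true to M together with
the edges ac, bc, ad, bd. -/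
noncomputable def addSquare₂ {V : Type} (M : SimpleGraph V) (a b : V) :
    SimpleGraph (V ⊕ Bool) :=
  SimpleGraph.fromRel (fun p q => match p, q with
    | Sum.inl p, Sum.inl q => M.Adj p q
    | Sum.inl p, Sum.inr _ => p = a ∨ p = b
    | _, _ => False)

set_option linter.unusedSectionVars false

namespace JAux
open Sum

variable {V : Type} [Fintype V]

/-- z has an M-neighbour among the inl-part of W. -/
def nbr (M : SimpleGraph V) (z : V) (W : Finset (V ⊕ Bool)) : Prop :=
  ∃ v, Sum.inl v ∈ W ∧ M.Adj z v

variable {M : SimpleGraph V} {a b : V}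

lemma mem_extN (G : SimpleGraph (V ⊕ Bool)) (W : Finset (V ⊕ Bool)) (v : V ⊕ Bool) :
    v ∈ extN G W ↔ v ∉ W ∧ ∃ w ∈ W, G.Adj v w := by
  simp [extN]

lemma adj1_ll (hab : a ≠ b) {u v : V} :
    (addSquare₁ M a b).Adj (inl u) (inl v) ↔ M.Adj u v ∨ (u = a ∧ v = b) ∨ (u = b ∧ v = a) := by
  simp only [addSquare₁, SimpleGraph.fromRel_adj, ne_eq, inl.injEq]
  constructor
  · rintro ⟨hne, h | h⟩ <;> rcases h with h | ⟨h1, h2⟩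
    · exact Or.inl h
    · exact Or.inr (Or.inl ⟨h1, h2⟩)
    · exact Or.inl h.symm
    · exact Or.inr (Or.inr ⟨h2, h1⟩)
  · rintro (h | ⟨h1, h2⟩ | ⟨h1, h2⟩)
    · exact ⟨h.ne, Or.inl (Or.inl h)⟩
    · subst h1; subst h2; exact ⟨hab, Or.inl (Or.inr ⟨rfl, rfl⟩)⟩
    · subst h1; subst h2; exact ⟨hab.symm, Or.inr (Or.inr ⟨rfl, rfl⟩)⟩

lemma adj1_lr {u : V} {t : Bool} :
    (addSquare₁ M a b).Adj (inl u) (inr t) ↔ (u = b ∧ t = false) ∨ (u = a ∧ t = true) := by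
  simp [addSquare₁, SimpleGraph.fromRel_adj]

lemma adj1_rl {u : V} {t : Bool} :
    (addSquare₁ M a b).Adj (inr t) (inl u) ↔ (u = b ∧ t = false) ∨ (u = a ∧ t = true) := by
  rw [SimpleGraph.adj_comm]; exact adj1_lr

lemma adj1_rr {t s : Bool} :
    (addSquare₁ M a b).Adj (inr t) (inr s) ↔ t ≠ s := by
  simp [addSquare₁, SimpleGraph.fromRel_adj]; tauto

lemma adj2_ll {u v : V} :
    (addSquare₂ M a b).Adj (inl u) (inl v) ↔ M.Adj u v := by
  simp only [addSquare₂, SimpleGraph.fromRel_adj, ne_eq, inl.injEq]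
  constructor
  · rintro ⟨hne, h | h⟩
    · exact h
    · exact h.symm
  · exact fun h => ⟨h.ne, Or.inl h⟩

lemma adj2_lr {u : V} {t : Bool} :
    (addSquare₂ M a b).Adj (inl u) (inr t) ↔ u = a ∨ u = b := by
  simp [addSquare₂, SimpleGraph.fromRel_adj]

lemma adj2_rl {u : V} {t : Bool} :
    (addSquare₂ M a b).Adj (inr t) (inl u) ↔ u = a ∨ u = b := by
  rw [SimpleGraph.adj_comm]; exact adj2_lr

lemma adj2_rr {t s : Bool} :
    (addSquare₂ M a b).Adj (inr t) (inr s) ↔ False := by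
  simp [addSquare₂, SimpleGraph.fromRel_adj]

/-! membership characterizations -/

lemma mem1_core (hab : a ≠ b) {u : V} (hua : u ≠ a) (hub : u ≠ b) (W : Finset (V ⊕ Bool)) :
    inl u ∈ extN (addSquare₁ M a b) W ↔ inl u ∉ W ∧ nbr M u W := by
  rw [mem_extN]
  refine and_congr_right fun _ => ⟨?_, ?_⟩
  · rintro ⟨w, hw, hadj⟩
    cases w with
    | inl v =>
      rw [adj1_ll hab] at hadj
      rcases hadj with h | ⟨h1, _⟩ | ⟨h1, _⟩
      · exact ⟨v, hw, h⟩
      · exact absurd h1 hua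
      · exact absurd h1 hub
    | inr t =>
      rw [adj1_lr] at hadj
      rcases hadj with ⟨h1, _⟩ | ⟨h1, _⟩
      · exact absurd h1 hub
      · exact absurd h1 hua
  · rintro ⟨v, hv, h⟩
    exact ⟨inl v, hv, (adj1_ll hab).2 (Or.inl h)⟩

lemma mem2_core {u : V} (hua : u ≠ a) (hub : u ≠ b) (W : Finset (V ⊕ Bool)) :
    inl u ∈ extN (addSquare₂ M a b) W ↔ inl u ∉ W ∧ nbr M u W := by
  rw [mem_extN]
  refine and_congr_right fun _ => ⟨?_, ?_⟩
  · rintro ⟨w, hw, hadj⟩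
    cases w with
    | inl v => exact ⟨v, hw, adj2_ll.1 hadj⟩
    | inr t =>
      rw [adj2_lr] at hadj
      rcases hadj with h | h
      · exact absurd h hua
      · exact absurd h hub
  · rintro ⟨v, hv, h⟩
    exact ⟨inl v, hv, adj2_ll.2 h⟩

lemma mem1_a (hab : a ≠ b) (W : Finset (V ⊕ Bool)) :
    inl a ∈ extN (addSquare₁ M a b) W ↔
      inl a ∉ W ∧ (nbr M a W ∨ inl b ∈ W ∨ inr true ∈ W) := by
  rw [mem_extN]
  refine and_congr_right fun _ => ⟨?_, ?_⟩
  · rintro ⟨w, hw, hadj⟩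
    cases w with
    | inl v =>
      rw [adj1_ll hab] at hadj
      rcases hadj with h | ⟨_, h2⟩ | ⟨h1, _⟩
      · exact Or.inl ⟨v, hw, h⟩
      · exact Or.inr (Or.inl (h2 ▸ hw))
      · exact absurd h1 hab
    | inr t =>
      rw [adj1_lr] at hadj
      rcases hadj with ⟨h1, _⟩ | ⟨_, h2⟩
      · exact absurd h1 hab
      · exact Or.inr (Or.inr (h2 ▸ hw))
  · rintro (⟨v, hv, h⟩ | h | h)
    · exact ⟨inl v, hv, (adj1_ll hab).2 (Or.inl h)⟩
    · exact ⟨inl b, h, (adj1_ll hab).2 (Or.inr (Or.inl ⟨rfl, rfl⟩))⟩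
    · exact ⟨inr true, h, adj1_lr.2 (Or.inr ⟨rfl, rfl⟩)⟩

lemma mem1_b (hab : a ≠ b) (W : Finset (V ⊕ Bool)) :
    inl b ∈ extN (addSquare₁ M a b) W ↔
      inl b ∉ W ∧ (nbr M b W ∨ inl a ∈ W ∨ inr false ∈ W) := by
  rw [mem_extN]
  refine and_congr_right fun _ => ⟨?_, ?_⟩
  · rintro ⟨w, hw, hadj⟩
    cases w with
    | inl v =>
      rw [adj1_ll hab] at hadj
      rcases hadj with h | ⟨h1, _⟩ | ⟨_, h2⟩
      · exact Or.inl ⟨v, hw, h⟩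
      · exact absurd h1 hab.symm
      · exact Or.inr (Or.inl (h2 ▸ hw))
    | inr t =>
      rw [adj1_lr] at hadj
      rcases hadj with ⟨_, h2⟩ | ⟨h1, _⟩
      · exact Or.inr (Or.inr (h2 ▸ hw))
      · exact absurd h1 hab.symm
  · rintro (⟨v, hv, h⟩ | h | h)
    · exact ⟨inl v, hv, (adj1_ll hab).2 (Or.inl h)⟩
    · exact ⟨inl a, h, (adj1_ll hab).2 (Or.inr (Or.inr ⟨rfl, rfl⟩))⟩
    · exact ⟨inr false, h, adj1_lr.2 (Or.inl ⟨rfl, rfl⟩)⟩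

lemma mem1_c (hab : a ≠ b) (W : Finset (V ⊕ Bool)) :
    inr false ∈ extN (addSquare₁ M a b) W ↔
      inr false ∉ W ∧ (inl b ∈ W ∨ inr true ∈ W) := by
  rw [mem_extN]
  refine and_congr_right fun _ => ⟨?_, ?_⟩
  · rintro ⟨w, hw, hadj⟩
    cases w with
    | inl v =>
      rw [adj1_rl] at hadj
      rcases hadj with ⟨h1, _⟩ | ⟨_, h2⟩
      · exact Or.inl (h1 ▸ hw)
      · exact absurd h2 (by simp)
    | inr t =>
      rw [adj1_rr] at hadj
      cases t
      · exact absurd rfl hadj.symm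
      · exact Or.inr hw
  · rintro (h | h)
    · exact ⟨inl b, h, adj1_rl.2 (Or.inl ⟨rfl, rfl⟩)⟩
    · exact ⟨inr true, h, adj1_rr.2 (by simp)⟩

lemma mem1_d (hab : a ≠ b) (W : Finset (V ⊕ Bool)) :
    inr true ∈ extN (addSquare₁ M a b) W ↔
      inr true ∉ W ∧ (inl a ∈ W ∨ inr false ∈ W) := by
  rw [mem_extN]
  refine and_congr_right fun _ => ⟨?_, ?_⟩
  · rintro ⟨w, hw, hadj⟩
    cases w with
    | inl v =>
      rw [adj1_rl] at hadj
      rcases hadj with ⟨_, h2⟩ | ⟨h1, _⟩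
      · exact absurd h2 (by simp)
      · exact Or.inl (h1 ▸ hw)
    | inr t =>
      rw [adj1_rr] at hadj
      cases t
      · exact Or.inr hw
      · exact absurd rfl hadj.symm
  · rintro (h | h)
    · exact ⟨inl a, h, adj1_rl.2 (Or.inr ⟨rfl, rfl⟩)⟩
    · exact ⟨inr false, h, adj1_rr.2 (by simp)⟩

lemma mem2_a (W : Finset (V ⊕ Bool)) :
    inl a ∈ extN (addSquare₂ M a b) W ↔
      inl a ∉ W ∧ (nbr M a W ∨ inr false ∈ W ∨ inr true ∈ W) := by
  rw [mem_extN]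
  refine and_congr_right fun _ => ⟨?_, ?_⟩
  · rintro ⟨w, hw, hadj⟩
    cases w with
    | inl v => exact Or.inl ⟨v, hw, adj2_ll.1 hadj⟩
    | inr t =>
      cases t
      · exact Or.inr (Or.inl hw)
      · exact Or.inr (Or.inr hw)
  · rintro (⟨v, hv, h⟩ | h | h)
    · exact ⟨inl v, hv, adj2_ll.2 h⟩
    · exact ⟨inr false, h, adj2_lr.2 (Or.inl rfl)⟩
    · exact ⟨inr true, h, adj2_lr.2 (Or.inl rfl)⟩

lemma mem2_b (W : Finset (V ⊕ Bool)) :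
    inl b ∈ extN (addSquare₂ M a b) W ↔
      inl b ∉ W ∧ (nbr M b W ∨ inr false ∈ W ∨ inr true ∈ W) := by
  rw [mem_extN]
  refine and_congr_right fun _ => ⟨?_, ?_⟩
  · rintro ⟨w, hw, hadj⟩
    cases w with
    | inl v => exact Or.inl ⟨v, hw, adj2_ll.1 hadj⟩
    | inr t =>
      cases t
      · exact Or.inr (Or.inl hw)
      · exact Or.inr (Or.inr hw)
  · rintro (⟨v, hv, h⟩ | h | h)
    · exact ⟨inl v, hv, adj2_ll.2 h⟩
    · exact ⟨inr false, h, adj2_lr.2 (Or.inr rfl)⟩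
    · exact ⟨inr true, h, adj2_lr.2 (Or.inr rfl)⟩

lemma mem2_c (W : Finset (V ⊕ Bool)) :
    inr false ∈ extN (addSquare₂ M a b) W ↔
      inr false ∉ W ∧ (inl a ∈ W ∨ inl b ∈ W) := by
  rw [mem_extN]
  refine and_congr_right fun _ => ⟨?_, ?_⟩
  · rintro ⟨w, hw, hadj⟩
    cases w with
    | inl v =>
      rcases adj2_rl.1 hadj with h | h
      · exact Or.inl (h ▸ hw)
      · exact Or.inr (h ▸ hw)
    | inr t => exact absurd hadj (by rw [adj2_rr]; exact id)
  · rintro (h | h)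
    · exact ⟨inl a, h, adj2_rl.2 (Or.inl rfl)⟩
    · exact ⟨inl b, h, adj2_rl.2 (Or.inr rfl)⟩

lemma mem2_d (W : Finset (V ⊕ Bool)) :
    inr true ∈ extN (addSquare₂ M a b) W ↔
      inr true ∉ W ∧ (inl a ∈ W ∨ inl b ∈ W) := by
  rw [mem_extN]
  refine and_congr_right fun _ => ⟨?_, ?_⟩
  · rintro ⟨w, hw, hadj⟩
    cases w with
    | inl v =>
      rcases adj2_rl.1 hadj with h | h
      · exact Or.inl (h ▸ hw)
      · exact Or.inr (h ▸ hw)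
    | inr t => exact absurd hadj (by rw [adj2_rr]; exact id)
  · rintro (h | h)
    · exact ⟨inl a, h, adj2_rl.2 (Or.inl rfl)⟩
    · exact ⟨inl b, h, adj2_rl.2 (Or.inr rfl)⟩


/-- The predicate cutting out the "core" vertices (inl u with u ∉ {a,b}). -/
def coreP (a b : V) (v : V ⊕ Bool) : Prop :=
  v ≠ inl a ∧ v ≠ inl b ∧ v ≠ inr false ∧ v ≠ inr true

lemma card_split (hab : a ≠ b) (s : Finset (V ⊕ Bool)) :
    s.card = (s.filter (coreP a b)).card +
      ((if inl a ∈ s then 1 else 0) + (if inl b ∈ s then 1 else 0) +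
       (if inr false ∈ s then 1 else 0) + (if inr true ∈ s then 1 else 0)) := by
  classical
  have h := Finset.card_filter_add_card_filter_not (s := s) (p := coreP a b)
  rw [← h]
  congr 1
  have e1 : s.filter (fun v => ¬ coreP a b v) =
      ({inl a, inl b, inr false, inr true} : Finset (V ⊕ Bool)).filter (· ∈ s) := by
    ext v
    simp [coreP, mem_filter, mem_insert]
    tauto
  rw [e1, Finset.card_filter]
  have d1 : (inl a : V ⊕ Bool) ∉ ({inl b, inr false, inr true} : Finset (V ⊕ Bool)) := by
    simp [hab]
  have d2 : (inl b : V ⊕ Bool) ∉ ({inr false, inr true} : Finset (V ⊕ Bool)) := by simp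
  have d3 : (inr false : V ⊕ Bool) ∉ ({inr true} : Finset (V ⊕ Bool)) := by simp
  rw [show ({inl a, inl b, inr false, inr true} : Finset (V ⊕ Bool)) =
      insert (inl a) (insert (inl b) (insert (inr false) {inr true})) from rfl,
    Finset.sum_insert d1, Finset.sum_insert d2, Finset.sum_insert d3, Finset.sum_singleton]
  ring

/-- The cores of extN₁ and extN₂ agree for the same W. -/
lemma core_eq (hab : a ≠ b) (W : Finset (V ⊕ Bool)) :
    (extN (addSquare₁ M a b) W).filter (coreP a b) =
      (extN (addSquare₂ M a b) W).filter (coreP a b) := by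
  ext v
  cases v with
  | inl u =>
    by_cases hua : u = a
    · subst hua; simp [mem_filter, coreP]
    · by_cases hub : u = b
      · subst hub; simp [mem_filter, coreP]
      · simp only [mem_filter, mem1_core hab hua hub, mem2_core hua hub]
  | inr t => cases t <;> simp [mem_filter, coreP]

section Key

variable (hab : a ≠ b) (hnadj : ¬ M.Adj a b)
  (hcommon : ∀ w, M.Adj a w → M.Adj b w → ∀ z, z ≠ w → M.Adj w z)
  (hside : (∀ w z, M.Adj a w → ¬ M.Adj b w → M.Adj b z → M.Adj w z) ∨
           (∀ w z, M.Adj b w → ¬ M.Adj a w → M.Adj a z → M.Adj w z))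

include hcommon hside in
lemma adj_trans_a {u s : V} (hua : M.Adj u a) (hbs : M.Adj b s) (hsu : s ≠ u) : M.Adj u s := by
  by_cases hbu : M.Adj b u
  · exact hcommon u hua.symm hbu s hsu
  · rcases hside with h | h
    · exact h u s hua.symm hbu hbs
    · by_cases has : M.Adj a s
      · exact (hcommon s has hbs u hsu.symm).symm
      · exact (h s u hbs has hua.symm).symm

include hcommon hside in
lemma adj_trans_b {u s : V} (hub : M.Adj u b) (has : M.Adj a s) (hsu : s ≠ u) : M.Adj u s := by
  by_cases hau : M.Adj a u
  · exact hcommon u hau hub.symm s hsu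
  · rcases hside with h | h
    · by_cases hbs : M.Adj b s
      · exact (hcommon s has hbs u hsu.symm).symm
      · exact (h s u has hbs hub.symm).symm
    · exact h u s hub.symm hau has

include hnadj hcommon hside in
/-- Key: if b has an M-neighbour in W, then for core u the neighbour relation
ignores whether a belongs to W. -/
lemma nbr_drop_a {W : Finset (V ⊕ Bool)} (hbW : ∃ s, inl s ∈ W ∧ M.Adj b s)
    {u : V} (huW : inl u ∉ W) :
    nbr M u W ↔ ∃ v, inl v ∈ W ∧ v ≠ a ∧ M.Adj u v := by
  constructor
  · rintro ⟨v, hv, hadj⟩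
    by_cases hva : v = a
    · have hua : M.Adj u a := hva ▸ hadj
      obtain ⟨s, hs, hbs⟩ := hbW
      have hsu : s ≠ u := fun e => huW (e ▸ hs)
      have hsa : s ≠ a := fun e => hnadj (e ▸ hbs).symm
      exact ⟨s, hs, hsa, adj_trans_a hcommon hside hua hbs hsu⟩
    · exact ⟨v, hv, hva, hadj⟩
  · rintro ⟨v, hv, _, hadj⟩
    exact ⟨v, hv, hadj⟩

include hnadj hcommon hside in
lemma nbr_drop_b {W : Finset (V ⊕ Bool)} (haW : ∃ s, inl s ∈ W ∧ M.Adj a s)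
    {u : V} (huW : inl u ∉ W) :
    nbr M u W ↔ ∃ v, inl v ∈ W ∧ v ≠ b ∧ M.Adj u v := by
  constructor
  · rintro ⟨v, hv, hadj⟩
    by_cases hvb : v = b
    · have hub : M.Adj u b := hvb ▸ hadj
      obtain ⟨s, hs, has⟩ := haW
      have hsu : s ≠ u := fun e => huW (e ▸ hs)
      have hsb : s ≠ b := fun e => hnadj (e ▸ has)
      exact ⟨s, hs, hsb, adj_trans_b hcommon hside hub has hsu⟩
    · exact ⟨v, hv, hvb, hadj⟩
  · rintro ⟨v, hv, _, hadj⟩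
    exact ⟨v, hv, hadj⟩

end Key

variable (M a b) in
/-- The swap involution. -/
noncomputable def phi (W : Finset (V ⊕ Bool)) : Finset (V ⊕ Bool) :=
  if inl a ∉ W ∧ inl b ∉ W ∧ inr true ∈ W ∧ inr false ∉ W ∧ nbr M b W then
    insert (inl a) (W.erase (inr true))
  else if inl a ∈ W ∧ inl b ∉ W ∧ inr true ∉ W ∧ inr false ∉ W ∧ nbr M b W then
    insert (inr true) (W.erase (inl a))
  else if inl a ∉ W ∧ inl b ∉ W ∧ inr false ∈ W ∧ inr true ∉ W ∧ nbr M a W then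
    insert (inl b) (W.erase (inr false))
  else if inl a ∉ W ∧ inl b ∈ W ∧ inr false ∉ W ∧ inr true ∉ W ∧ nbr M a W then
    insert (inr false) (W.erase (inl b))
  else W

lemma nbr_mod (z : V) (W W' : Finset (V ⊕ Bool))
    (h : ∀ v, M.Adj z v → (inl v ∈ W ↔ inl v ∈ W')) : nbr M z W ↔ nbr M z W' :=
  exists_congr fun v =>
    ⟨fun ⟨hm, ha⟩ => ⟨(h v ha).1 hm, ha⟩, fun ⟨hm, ha⟩ => ⟨(h v ha).2 hm, ha⟩⟩

section Swap

variable (hab : a ≠ b) (hnadj : ¬ M.Adj a b)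
  (hcommon : ∀ w, M.Adj a w → M.Adj b w → ∀ z, z ≠ w → M.Adj w z)
  (hside : (∀ w z, M.Adj a w → ¬ M.Adj b w → M.Adj b z → M.Adj w z) ∨
           (∀ w z, M.Adj b w → ¬ M.Adj a w → M.Adj a z → M.Adj w z))

include hnadj in
lemma nbr_b_swap1 (W : Finset (V ⊕ Bool)) :
    nbr M b W ↔ nbr M b (insert (inl a) (W.erase (inr true))) := by
  refine nbr_mod b _ _ fun v hv => ?_
  have hva : v ≠ a := fun e => hnadj ((e ▸ hv : M.Adj b a)).symm
  simp [Finset.mem_insert, Finset.mem_erase, hva]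

include hnadj in
lemma nbr_b_swap2 (W : Finset (V ⊕ Bool)) :
    nbr M b W ↔ nbr M b (insert (inr true) (W.erase (inl a))) := by
  refine nbr_mod b _ _ fun v hv => ?_
  have hva : v ≠ a := fun e => hnadj ((e ▸ hv : M.Adj b a)).symm
  simp [Finset.mem_insert, Finset.mem_erase, hva]

include hnadj in
lemma nbr_a_swap3 (W : Finset (V ⊕ Bool)) :
    nbr M a W ↔ nbr M a (insert (inl b) (W.erase (inr false))) := by
  refine nbr_mod a _ _ fun v hv => ?_
  have hvb : v ≠ b := fun e => hnadj (e ▸ hv)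
  simp [Finset.mem_insert, Finset.mem_erase, hvb]

include hnadj in
lemma nbr_a_swap4 (W : Finset (V ⊕ Bool)) :
    nbr M a W ↔ nbr M a (insert (inr false) (W.erase (inl b))) := by
  refine nbr_mod a _ _ fun v hv => ?_
  have hvb : v ≠ b := fun e => hnadj (e ▸ hv)
  simp [Finset.mem_insert, Finset.mem_erase, hvb]

include hab hnadj in
lemma phi_invol (W : Finset (V ⊕ Bool)) : phi M a b (phi M a b W) = W := by
  by_cases h1 : inl a ∉ W ∧ inl b ∉ W ∧ inr true ∈ W ∧ inr false ∉ W ∧ nbr M b W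
  · obtain ⟨ha1, hb1, hd1, hc1, hQ⟩ := h1
    set W' := insert (inl a) (W.erase (inr true)) with hW'
    have e0 : phi M a b W = W' := by rw [phi, if_pos ⟨ha1, hb1, hd1, hc1, hQ⟩]
    rw [e0]
    have haW' : inl a ∈ W' := Finset.mem_insert_self _ _
    have hbW' : inl b ∉ W' := by simp [hW', Finset.mem_insert, Finset.mem_erase, hab.symm, hb1]
    have hdW' : (inr true : V ⊕ Bool) ∉ W' := by simp [hW', Finset.mem_insert, Finset.mem_erase]
    have hcW' : (inr false : V ⊕ Bool) ∉ W' := by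
      simp [hW', Finset.mem_insert, Finset.mem_erase, hc1]
    have hQ' : nbr M b W' := (nbr_b_swap1 hnadj W).1 hQ
    rw [phi, if_neg (fun h => h.1 haW'), if_pos ⟨haW', hbW', hdW', hcW', hQ'⟩]
    rw [hW', Finset.erase_insert (by simp [Finset.mem_erase, ha1])]
    exact Finset.insert_erase hd1
  · by_cases h2 : inl a ∈ W ∧ inl b ∉ W ∧ inr true ∉ W ∧ inr false ∉ W ∧ nbr M b W
    · obtain ⟨ha2, hb2, hd2, hc2, hQ⟩ := h2
      set W' := insert (inr true) (W.erase (inl a)) with hW'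
      have e0 : phi M a b W = W' := by
        rw [phi, if_neg h1, if_pos ⟨ha2, hb2, hd2, hc2, hQ⟩]
      rw [e0]
      have haW' : inl a ∉ W' := by simp [hW', Finset.mem_insert, Finset.mem_erase]
      have hbW' : inl b ∉ W' := by simp [hW', Finset.mem_insert, Finset.mem_erase, hb2]
      have hdW' : (inr true : V ⊕ Bool) ∈ W' := Finset.mem_insert_self _ _
      have hcW' : (inr false : V ⊕ Bool) ∉ W' := by
        simp [hW', Finset.mem_insert, Finset.mem_erase, hc2]
      have hQ' : nbr M b W' := (nbr_b_swap2 hnadj W).1 hQ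
      rw [phi, if_pos ⟨haW', hbW', hdW', hcW', hQ'⟩]
      rw [hW', Finset.erase_insert (by simp [Finset.mem_erase, hd2])]
      exact Finset.insert_erase ha2
    · by_cases h3 : inl a ∉ W ∧ inl b ∉ W ∧ inr false ∈ W ∧ inr true ∉ W ∧ nbr M a W
      · obtain ⟨ha3, hb3, hc3, hd3, hP⟩ := h3
        set W' := insert (inl b) (W.erase (inr false)) with hW'
        have e0 : phi M a b W = W' := by
          rw [phi, if_neg h1, if_neg h2, if_pos ⟨ha3, hb3, hc3, hd3, hP⟩]
        rw [e0]
        have haW' : inl a ∉ W' := by simp [hW', Finset.mem_insert, Finset.mem_erase, hab, ha3]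
        have hbW' : inl b ∈ W' := Finset.mem_insert_self _ _
        have hdW' : (inr true : V ⊕ Bool) ∉ W' := by
          simp [hW', Finset.mem_insert, Finset.mem_erase, hd3]
        have hcW' : (inr false : V ⊕ Bool) ∉ W' := by
          simp [hW', Finset.mem_insert, Finset.mem_erase]
        have hP' : nbr M a W' := (nbr_a_swap3 hnadj W).1 hP
        rw [phi, if_neg (fun h => hdW' h.2.2.1), if_neg (fun h => haW' h.1),
          if_neg (fun h => hcW' h.2.2.1), if_pos ⟨haW', hbW', hcW', hdW', hP'⟩]
        rw [hW', Finset.erase_insert (by simp [Finset.mem_erase, hb3])]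
        exact Finset.insert_erase hc3
      · by_cases h4 : inl a ∉ W ∧ inl b ∈ W ∧ inr false ∉ W ∧ inr true ∉ W ∧ nbr M a W
        · obtain ⟨ha4, hb4, hc4, hd4, hP⟩ := h4
          set W' := insert (inr false) (W.erase (inl b)) with hW'
          have e0 : phi M a b W = W' := by
            rw [phi, if_neg h1, if_neg h2, if_neg h3, if_pos ⟨ha4, hb4, hc4, hd4, hP⟩]
          rw [e0]
          have haW' : inl a ∉ W' := by
            simp [hW', Finset.mem_insert, Finset.mem_erase, ha4]
          have hbW' : inl b ∉ W' := by simp [hW', Finset.mem_insert, Finset.mem_erase]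
          have hdW' : (inr true : V ⊕ Bool) ∉ W' := by
            simp [hW', Finset.mem_insert, Finset.mem_erase, hd4]
          have hcW' : (inr false : V ⊕ Bool) ∈ W' := Finset.mem_insert_self _ _
          have hP' : nbr M a W' := (nbr_a_swap4 hnadj W).1 hP
          rw [phi, if_neg (fun h => hdW' h.2.2.1), if_neg (fun h => haW' h.1),
            if_pos ⟨haW', hbW', hcW', hdW', hP'⟩]
          rw [hW', Finset.erase_insert (by simp [Finset.mem_erase, hc4])]
          exact Finset.insert_erase hb4
        · have e0 : phi M a b W = W := by
            rw [phi, if_neg h1, if_neg h2, if_neg h3, if_neg h4]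
          rw [e0, e0]

lemma phi_card (W : Finset (V ⊕ Bool)) : (phi M a b W).card = W.card := by
  rw [phi]
  split_ifs with h1 h2 h3 h4
  · rw [Finset.card_insert_of_notMem (by simp [Finset.mem_erase, h1.1]),
      Finset.card_erase_add_one h1.2.2.1]
  · rw [Finset.card_insert_of_notMem (by simp [Finset.mem_erase, h2.2.2.1]),
      Finset.card_erase_add_one h2.1]
  · rw [Finset.card_insert_of_notMem (by simp [Finset.mem_erase, h3.2.1]),
      Finset.card_erase_add_one h3.2.2.1]
  · rw [Finset.card_insert_of_notMem (by simp [Finset.mem_erase, h4.2.2.1]),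
      Finset.card_erase_add_one h4.2.1]
  · rfl

include hnadj hcommon hside in
lemma core_swap_a (W W' : Finset (V ⊕ Bool)) (hQ : nbr M b W) (hQ' : nbr M b W')
    (hmem : ∀ v : V, v ≠ a → (inl v ∈ W ↔ inl v ∈ W')) :
    (extN (addSquare₂ M a b) W).filter (coreP a b) =
      (extN (addSquare₂ M a b) W').filter (coreP a b) := by
  ext v
  cases v with
  | inr t => cases t <;> simp [Finset.mem_filter, coreP]
  | inl u =>
    by_cases hua : u = a
    · simp [Finset.mem_filter, coreP, hua]
    · by_cases hub : u = b
      · simp [Finset.mem_filter, coreP, hub]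
      · simp only [Finset.mem_filter, mem2_core hua hub]
        have hm := hmem u hua
        constructor
        · rintro ⟨⟨hnm, hn⟩, hc⟩
          have hnm' : inl u ∉ W' := fun h => hnm (hm.2 h)
          refine ⟨⟨hnm', ?_⟩, hc⟩
          obtain ⟨v', hv', hva, hadj⟩ := (nbr_drop_a hnadj hcommon hside hQ hnm).1 hn
          exact (nbr_drop_a hnadj hcommon hside hQ' hnm').2
            ⟨v', (hmem v' hva).1 hv', hva, hadj⟩
        · rintro ⟨⟨hnm, hn⟩, hc⟩
          have hnmW : inl u ∉ W := fun h => hnm (hm.1 h)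
          refine ⟨⟨hnmW, ?_⟩, hc⟩
          obtain ⟨v', hv', hva, hadj⟩ := (nbr_drop_a hnadj hcommon hside hQ' hnm).1 hn
          exact (nbr_drop_a hnadj hcommon hside hQ hnmW).2
            ⟨v', (hmem v' hva).2 hv', hva, hadj⟩

include hnadj hcommon hside in
lemma core_swap_b (W W' : Finset (V ⊕ Bool)) (hP : nbr M a W) (hP' : nbr M a W')
    (hmem : ∀ v : V, v ≠ b → (inl v ∈ W ↔ inl v ∈ W')) :
    (extN (addSquare₂ M a b) W).filter (coreP a b) =
      (extN (addSquare₂ M a b) W').filter (coreP a b) := by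
  ext v
  cases v with
  | inr t => cases t <;> simp [Finset.mem_filter, coreP]
  | inl u =>
    by_cases hua : u = a
    · simp [Finset.mem_filter, coreP, hua]
    · by_cases hub : u = b
      · simp [Finset.mem_filter, coreP, hub]
      · simp only [Finset.mem_filter, mem2_core hua hub]
        have hm := hmem u hub
        constructor
        · rintro ⟨⟨hnm, hn⟩, hc⟩
          have hnm' : inl u ∉ W' := fun h => hnm (hm.2 h)
          refine ⟨⟨hnm', ?_⟩, hc⟩
          obtain ⟨v', hv', hvb, hadj⟩ := (nbr_drop_b hnadj hcommon hside hP hnm).1 hn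
          exact (nbr_drop_b hnadj hcommon hside hP' hnm').2
            ⟨v', (hmem v' hvb).1 hv', hvb, hadj⟩
        · rintro ⟨⟨hnm, hn⟩, hc⟩
          have hnmW : inl u ∉ W := fun h => hnm (hm.1 h)
          refine ⟨⟨hnmW, ?_⟩, hc⟩
          obtain ⟨v', hv', hvb, hadj⟩ := (nbr_drop_b hnadj hcommon hside hP' hnm).1 hn
          exact (nbr_drop_b hnadj hcommon hside hP hnmW).2
            ⟨v', (hmem v' hvb).2 hv', hvb, hadj⟩

set_option maxHeartbeats 1000000 in
include hab hnadj hcommon hside in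
lemma phi_extN (W : Finset (V ⊕ Bool)) :
    (extN (addSquare₁ M a b) W).card = (extN (addSquare₂ M a b) (phi M a b W)).card := by
  by_cases h1 : inl a ∉ W ∧ inl b ∉ W ∧ inr true ∈ W ∧ inr false ∉ W ∧ nbr M b W
  · obtain ⟨ha1, hb1, hd1, hc1, hQ⟩ := h1
    set W' := insert (inl a) (W.erase (inr true)) with hW'
    have e0 : phi M a b W = W' := by rw [phi, if_pos ⟨ha1, hb1, hd1, hc1, hQ⟩]
    have haW' : inl a ∈ W' := Finset.mem_insert_self _ _
    have hbW' : inl b ∉ W' := by simp [hW', Finset.mem_insert, Finset.mem_erase, hab.symm, hb1]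
    have hdW' : (inr true : V ⊕ Bool) ∉ W' := by simp [hW', Finset.mem_insert, Finset.mem_erase]
    have hcW' : (inr false : V ⊕ Bool) ∉ W' := by
      simp [hW', Finset.mem_insert, Finset.mem_erase, hc1]
    have hQ' : nbr M b W' := (nbr_b_swap1 hnadj W).1 hQ
    have hmem : ∀ v : V, v ≠ a → (inl v ∈ W ↔ inl v ∈ W') := fun v hv => by
      simp [hW', Finset.mem_insert, Finset.mem_erase, hv]
    rw [e0, card_split hab (extN (addSquare₁ M a b) W),
      card_split hab (extN (addSquare₂ M a b) W'), core_eq hab,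
      core_swap_a hnadj hcommon hside W W' hQ hQ' hmem]
    congr 1
    simp only [mem1_a hab, mem1_b hab, mem1_c hab, mem1_d hab, mem2_a, mem2_b, mem2_c, mem2_d]
    simp [ha1, hb1, hd1, hc1, hQ, haW', hbW', hcW', hdW', hQ']
  · by_cases h2 : inl a ∈ W ∧ inl b ∉ W ∧ inr true ∉ W ∧ inr false ∉ W ∧ nbr M b W
    · obtain ⟨ha2, hb2, hd2, hc2, hQ⟩ := h2
      set W' := insert (inr true) (W.erase (inl a)) with hW'
      have e0 : phi M a b W = W' := by
        rw [phi, if_neg h1, if_pos ⟨ha2, hb2, hd2, hc2, hQ⟩]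
      have haW' : inl a ∉ W' := by simp [hW', Finset.mem_insert, Finset.mem_erase]
      have hbW' : inl b ∉ W' := by simp [hW', Finset.mem_insert, Finset.mem_erase, hb2]
      have hdW' : (inr true : V ⊕ Bool) ∈ W' := Finset.mem_insert_self _ _
      have hcW' : (inr false : V ⊕ Bool) ∉ W' := by
        simp [hW', Finset.mem_insert, Finset.mem_erase, hc2]
      have hQ' : nbr M b W' := (nbr_b_swap2 hnadj W).1 hQ
      have hmem : ∀ v : V, v ≠ a → (inl v ∈ W ↔ inl v ∈ W') := fun v hv => by
        simp [hW', Finset.mem_insert, Finset.mem_erase, hv]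
      rw [e0, card_split hab (extN (addSquare₁ M a b) W),
        card_split hab (extN (addSquare₂ M a b) W'), core_eq hab,
        core_swap_a hnadj hcommon hside W W' hQ hQ' hmem]
      congr 1
      simp only [mem1_a hab, mem1_b hab, mem1_c hab, mem1_d hab, mem2_a, mem2_b, mem2_c,
        mem2_d]
      simp [ha2, hb2, hd2, hc2, hQ, haW', hbW', hcW', hdW', hQ']
    · by_cases h3 : inl a ∉ W ∧ inl b ∉ W ∧ inr false ∈ W ∧ inr true ∉ W ∧ nbr M a W
      · obtain ⟨ha3, hb3, hc3, hd3, hP⟩ := h3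
        set W' := insert (inl b) (W.erase (inr false)) with hW'
        have e0 : phi M a b W = W' := by
          rw [phi, if_neg h1, if_neg h2, if_pos ⟨ha3, hb3, hc3, hd3, hP⟩]
        have haW' : inl a ∉ W' := by simp [hW', Finset.mem_insert, Finset.mem_erase, hab, ha3]
        have hbW' : inl b ∈ W' := Finset.mem_insert_self _ _
        have hdW' : (inr true : V ⊕ Bool) ∉ W' := by
          simp [hW', Finset.mem_insert, Finset.mem_erase, hd3]
        have hcW' : (inr false : V ⊕ Bool) ∉ W' := by
          simp [hW', Finset.mem_insert, Finset.mem_erase]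
        have hP' : nbr M a W' := (nbr_a_swap3 hnadj W).1 hP
        have hmem : ∀ v : V, v ≠ b → (inl v ∈ W ↔ inl v ∈ W') := fun v hv => by
          simp [hW', Finset.mem_insert, Finset.mem_erase, hv]
        rw [e0, card_split hab (extN (addSquare₁ M a b) W),
          card_split hab (extN (addSquare₂ M a b) W'), core_eq hab,
          core_swap_b hnadj hcommon hside W W' hP hP' hmem]
        congr 1
        simp only [mem1_a hab, mem1_b hab, mem1_c hab, mem1_d hab, mem2_a, mem2_b, mem2_c,
          mem2_d]
        simp [ha3, hb3, hd3, hc3, hP, haW', hbW', hcW', hdW', hP']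
      · by_cases h4 : inl a ∉ W ∧ inl b ∈ W ∧ inr false ∉ W ∧ inr true ∉ W ∧ nbr M a W
        · obtain ⟨ha4, hb4, hc4, hd4, hP⟩ := h4
          set W' := insert (inr false) (W.erase (inl b)) with hW'
          have e0 : phi M a b W = W' := by
            rw [phi, if_neg h1, if_neg h2, if_neg h3, if_pos ⟨ha4, hb4, hc4, hd4, hP⟩]
          have haW' : inl a ∉ W' := by
            simp [hW', Finset.mem_insert, Finset.mem_erase, ha4]
          have hbW' : inl b ∉ W' := by simp [hW', Finset.mem_insert, Finset.mem_erase]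
          have hdW' : (inr true : V ⊕ Bool) ∉ W' := by
            simp [hW', Finset.mem_insert, Finset.mem_erase, hd4]
          have hcW' : (inr false : V ⊕ Bool) ∈ W' := Finset.mem_insert_self _ _
          have hP' : nbr M a W' := (nbr_a_swap4 hnadj W).1 hP
          have hmem : ∀ v : V, v ≠ b → (inl v ∈ W ↔ inl v ∈ W') := fun v hv => by
            simp [hW', Finset.mem_insert, Finset.mem_erase, hv]
          rw [e0, card_split hab (extN (addSquare₁ M a b) W),
            card_split hab (extN (addSquare₂ M a b) W'), core_eq hab,
            core_swap_b hnadj hcommon hside W W' hP hP' hmem]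
          congr 1
          simp only [mem1_a hab, mem1_b hab, mem1_c hab, mem1_d hab, mem2_a, mem2_b, mem2_c,
            mem2_d]
          simp [ha4, hb4, hd4, hc4, hP, haW', hbW', hcW', hdW', hP']
        · have e0 : phi M a b W = W := by
            rw [phi, if_neg h1, if_neg h2, if_neg h3, if_neg h4]
          rw [e0, card_split hab (extN (addSquare₁ M a b) W),
            card_split hab (extN (addSquare₂ M a b) W), core_eq hab]
          congr 1
          simp only [mem1_a hab, mem1_b hab, mem1_c hab, mem1_d hab, mem2_a, mem2_b, mem2_c,
            mem2_d]
          clear hcommon hside hnadj hab e0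
          by_cases hA : inl a ∈ W <;> by_cases hB : inl b ∈ W <;>
            by_cases hC : (inr false : V ⊕ Bool) ∈ W <;>
            by_cases hD : (inr true : V ⊕ Bool) ∈ W <;>
            by_cases hP : nbr M a W <;> by_cases hQ : nbr M b W <;>
            simp_all

end Swap

end JAux

theorem J_add_square_two_ways {V : Type} [Fintype V] (M : SimpleGraph V) (a b : V)
    (hab : a ≠ b) (hnadj : ¬ M.Adj a b)
    (hcommon : ∀ w, M.Adj a w → M.Adj b w → ∀ z, z ≠ w → M.Adj w z)
    (hside : (∀ w z, M.Adj a w → ¬ M.Adj b w → M.Adj b z → M.Adj w z) ∨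
             (∀ w z, M.Adj b w → ¬ M.Adj a w → M.Adj a z → M.Adj w z))
    (x y : ℝ) :
    JP (addSquare₁ M a b) x y = JP (addSquare₂ M a b) x y := by
  unfold JP
  refine Fintype.sum_bijective (JAux.phi M a b)
    (Function.Involutive.bijective fun W => JAux.phi_invol hab hnadj W) _ _ fun W => ?_
  rw [JAux.phi_card, JAux.phi_extN hab hnadj hcommon hside]
end
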